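/- Let η ~ Γ(r, rK) with shape r > 0 and rate rK, K > 0. Then ∫₁^∞ P(η > x) dx ≤ e^{r+1} · K^r · e^{-rK}, provided K > 1 (so that 1 > shape/rate after any required threshold conditions; specifically provided 1 > 1/K, i.e. rK > r). -/

import Mathlib

open ProbabilityTheory MeasureTheory Set

/-- Normalization of the gamma integral as a Lebesgue integral over `Ioi 0`. -/
lemma lintegral_rpow_exp_aux {p c : ℝ} (hp : 0 < p) (hc : 0 < c) :
    ∫⁻ x in Set.Ioi (0:ℝ), ENNReal.ofReal (x ^ (p - 1) * Real.exp (-(c * x)))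
      = ENNReal.ofReal ((c ^ p)⁻¹ * Real.Gamma p) := by
  have hΓ : 0 < Real.Gamma p := Real.Gamma_pos_of_pos hp
  have hcp : 0 < c ^ p := Real.rpow_pos_of_pos hc p
  have h1 : ∫⁻ x in Set.Ioi (0:ℝ), gammaPDF p c x = 1 := by
    have htot := lintegral_gammaPDF_eq_one hp hc
    have hIio : ∫⁻ x in Set.Iio (0:ℝ), gammaPDF p c x = 0 := by
      rw [setLIntegral_congr_fun measurableSet_Iio
        (fun x (hx : x < 0) ↦ gammaPDF_of_neg hx), lintegral_zero]
    have hsplit := lintegral_add_compl (gammaPDF p c) (measurableSet_Iio (a := (0:ℝ)))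
      (μ := (volume : Measure ℝ))
    rw [compl_Iio, hIio, zero_add] at hsplit
    have hIoiIci : ∫⁻ x in Set.Ioi (0:ℝ), gammaPDF p c x
        = ∫⁻ x in Set.Ici (0:ℝ), gammaPDF p c x := by
      rw [MeasureTheory.Measure.restrict_congr_set Ioi_ae_eq_Ici]
    rw [hIoiIci, hsplit, htot]
  have h2 : ∫⁻ x in Set.Ioi (0:ℝ), gammaPDF p c x
      = ENNReal.ofReal (c ^ p / Real.Gamma p)
        * ∫⁻ x in Set.Ioi (0:ℝ), ENNReal.ofReal (x ^ (p - 1) * Real.exp (-(c * x))) := by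
    rw [← lintegral_const_mul' _ _ ENNReal.ofReal_ne_top]
    refine setLIntegral_congr_fun measurableSet_Ioi (fun x hx => ?_)
    have hx0 : (0:ℝ) ≤ x := le_of_lt hx
    rw [gammaPDF_of_nonneg hx0, ← ENNReal.ofReal_mul (by positivity), mul_assoc]
  rw [h2] at h1
  have h3 : ∫⁻ x in Set.Ioi (0:ℝ), ENNReal.ofReal (x ^ (p - 1) * Real.exp (-(c * x)))
      = (ENNReal.ofReal (c ^ p / Real.Gamma p))⁻¹ :=
    ENNReal.eq_inv_of_mul_eq_one_left (by rw [mul_comm] at h1; exact h1)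
  rw [h3, ← ENNReal.ofReal_inv_of_pos (by positivity)]
  congr 1
  field_simp

theorem gamma_integrated_tail_bound (r K : ℝ) (hr : 0 < r) (hK : 1 < K) :
    ∫ x in Set.Ioi (1 : ℝ), (gammaMeasure r (r * K) (Set.Ioi x)).toReal
      ≤ Real.exp (r + 1) * K ^ (r : ℝ) * Real.exp (-r * K) := by
  have hK0 : (0:ℝ) < K := lt_trans one_pos hK
  set b : ℝ := r * K with hbdef
  have hb : 0 < b := mul_pos hr hK0
  have hΓ : 0 < Real.Gamma r := Real.Gamma_pos_of_pos hr
  set μ : Measure ℝ := gammaMeasure r b with hμdef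
  haveI : IsProbabilityMeasure μ := isProbabilityMeasure_gammaMeasure hr hb
  have hRHS : (0:ℝ) ≤ Real.exp (r + 1) * K ^ (r:ℝ) * Real.exp (-r * K) := by positivity
  -- the parameters of the exponential shift
  set s : ℝ := max (b - (r + 1)) 0 with hsdef
  set c : ℝ := min b (r + 1) with hcdef
  have hs : 0 ≤ s := le_max_right _ _
  have hc : 0 < c := lt_min hb (by linarith)
  have hsc : s + c = b := by
    rcases le_total (r + 1) b with h | h
    · rw [hsdef, hcdef, max_eq_left (by linarith), min_eq_right h]; ring
    · rw [hsdef, hcdef, max_eq_right (by linarith), min_eq_left h]; ring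
  set D : ℝ := b ^ r / Real.Gamma r * Real.exp (-s) with hDdef
  have hD0 : (0:ℝ) ≤ D := by positivity
  -- the key bound on the tail lintegral
  have key : ∫⁻ x in Set.Ioi (1:ℝ), μ (Set.Ioi x)
      ≤ ENNReal.ofReal (Real.exp (r + 1) * K ^ (r:ℝ) * Real.exp (-r * K)) := by
    -- layer cake
    have lc1 : ∫⁻ a, ENNReal.ofReal (max (a - 1) 0) ∂μ
        = ∫⁻ t in Set.Ioi (0:ℝ), μ {a : ℝ | t < max (a - 1) 0} :=
      lintegral_eq_lintegral_meas_lt μ (ae_of_all _ fun a => le_max_right _ _)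
        ((measurable_id.sub measurable_const).max measurable_const).aemeasurable
    have lc2 : ∫⁻ t in Set.Ioi (0:ℝ), μ {a : ℝ | t < max (a - 1) 0}
        = ∫⁻ t in Set.Ioi (0:ℝ), μ (Set.Ioi (1 + t)) := by
      refine setLIntegral_congr_fun measurableSet_Ioi (fun t ht => ?_)
      have ht' : (0:ℝ) < t := ht
      congr 1
      ext a
      simp only [Set.mem_setOf_eq, Set.mem_Ioi, lt_max_iff]
      constructor
      · rintro (h | h) <;> linarith
      · intro h; left; linarith
    have lc3 : ∫⁻ t in Set.Ioi (0:ℝ), μ (Set.Ioi (1 + t))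
        = ∫⁻ x in Set.Ioi (1:ℝ), μ (Set.Ioi x) := by
      have hemb : MeasurableEmbedding (fun t : ℝ => 1 + t) :=
        (MeasurableEquiv.addLeft (1:ℝ)).measurableEmbedding
      have h := (measurePreserving_add_left (volume : Measure ℝ)
        (1:ℝ)).setLIntegral_comp_preimage_emb hemb
        (fun x => μ (Set.Ioi x)) (Set.Ioi (1:ℝ))
      have hpre : (fun t : ℝ => 1 + t) ⁻¹' Set.Ioi (1:ℝ) = Set.Ioi (0:ℝ) := by
        ext t
        simp only [Set.mem_preimage, Set.mem_Ioi]
        constructor <;> intro <;> linarith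
      rw [hpre] at h
      exact h
    -- withDensity
    have wd : ∫⁻ a, ENNReal.ofReal (max (a - 1) 0) ∂μ
        = ∫⁻ a, gammaPDF r b a * ENNReal.ofReal (max (a - 1) 0) := by
      rw [hμdef, gammaMeasure]
      exact lintegral_withDensity_eq_lintegral_mul _
        ((measurable_gammaPDFReal r b).ennreal_ofReal)
        (((measurable_id.sub measurable_const).max measurable_const).ennreal_ofReal)
    -- pointwise bound
    have ptw : ∀ a : ℝ, gammaPDF r b a * ENNReal.ofReal (max (a - 1) 0)
        ≤ (Set.Ioi (1:ℝ)).indicator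
            (fun a => ENNReal.ofReal (D * (a ^ (r + 1 - 1) * Real.exp (-(c * a))))) a := by
      intro a
      by_cases ha : 1 < a
      · have hmem : a ∈ Set.Ioi (1:ℝ) := ha
        rw [Set.indicator_of_mem hmem]
        have ha0 : (0:ℝ) < a := by linarith
        rw [gammaPDF_of_nonneg ha0.le, max_eq_left (by linarith),
          ← ENNReal.ofReal_mul (by positivity)]
        apply ENNReal.ofReal_le_ofReal
        have e1 : a ^ (r - 1) * (a - 1) ≤ a ^ (r + 1 - 1) := by
          have h : a ^ (r + 1 - 1) = a ^ (r - 1) * a := by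
            rw [show r + 1 - 1 = (r - 1) + 1 by ring, Real.rpow_add_one ha0.ne']
          rw [h]
          exact mul_le_mul_of_nonneg_left (by linarith) (Real.rpow_nonneg ha0.le _)
        have e2 : Real.exp (-(b * a)) ≤ Real.exp (-s) * Real.exp (-(c * a)) := by
          rw [← Real.exp_add]
          apply Real.exp_le_exp.mpr
          nlinarith [mul_nonneg hs (by linarith : (0:ℝ) ≤ a - 1)]
        calc b ^ r / Real.Gamma r * a ^ (r - 1) * Real.exp (-(b * a)) * (a - 1)
            = b ^ r / Real.Gamma r * ((a ^ (r - 1) * (a - 1)) * Real.exp (-(b * a))) := by ring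
          _ ≤ b ^ r / Real.Gamma r
              * (a ^ (r + 1 - 1) * (Real.exp (-s) * Real.exp (-(c * a)))) := by
              refine mul_le_mul_of_nonneg_left ?_ (by positivity)
              exact mul_le_mul e1 e2 (Real.exp_pos _).le (Real.rpow_nonneg ha0.le _)
          _ = D * (a ^ (r + 1 - 1) * Real.exp (-(c * a))) := by rw [hDdef]; ring
      · have h0 : max (a - 1) 0 = 0 := max_eq_right (by linarith)
        rw [h0, ENNReal.ofReal_zero, mul_zero]
        exact zero_le
    -- final real inequality
    have final : D * ((c ^ (r + 1))⁻¹ * Real.Gamma (r + 1))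
        ≤ Real.exp (r + 1) * K ^ (r:ℝ) * Real.exp (-r * K) := by
      have hΓ1 : Real.Gamma (r + 1) = r * Real.Gamma r := Real.Gamma_add_one hr.ne'
      have hbr : b ^ r = r ^ r * K ^ (r:ℝ) := Real.mul_rpow hr.le hK0.le
      rcases le_total (r + 1) b with h | h
      · -- b ≥ r + 1
        have hsval : s = b - (r + 1) := by rw [hsdef, max_eq_left (by linarith)]
        have hcval : c = r + 1 := by rw [hcdef, min_eq_right h]
        have hr1 : (0:ℝ) < (r + 1) ^ (r + 1) := Real.rpow_pos_of_pos (by linarith) _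
        have hkey : r ^ (r + 1) ≤ (r + 1) ^ (r + 1) :=
          Real.rpow_le_rpow hr.le (by linarith) (by linarith)
        have hrr : r ^ (r + 1) = r ^ r * r := by
          rw [Real.rpow_add_one hr.ne']
        have hexp : Real.exp (-s) = Real.exp (r + 1) * Real.exp (-r * K) := by
          rw [← Real.exp_add]; congr 1; rw [hsval, hbdef]; ring
        rw [hDdef, hcval, hΓ1, hexp, hbr]
        have hrw : r ^ r * K ^ (r:ℝ) / Real.Gamma r * (Real.exp (r + 1) * Real.exp (-r * K))
            * (((r + 1) ^ (r + 1))⁻¹ * (r * Real.Gamma r))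
            = (r ^ (r + 1) / (r + 1) ^ (r + 1))
              * (Real.exp (r + 1) * K ^ (r:ℝ) * Real.exp (-r * K)) := by
          rw [hrr]; field_simp
        rw [hrw]
        have h1 : r ^ (r + 1) / (r + 1) ^ (r + 1) ≤ 1 := (div_le_one hr1).mpr hkey
        nlinarith [Real.exp_pos (r + 1), Real.exp_pos (-r * K),
          Real.rpow_pos_of_pos hK0 (r:ℝ), mul_pos (mul_pos (Real.exp_pos (r + 1))
            (Real.rpow_pos_of_pos hK0 (r:ℝ))) (Real.exp_pos (-r * K))]
      · -- b ≤ r + 1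
        have hsval : s = 0 := by rw [hsdef, max_eq_right (by linarith)]
        have hcval : c = b := by rw [hcdef, min_eq_left h]
        have hlhs : D * ((c ^ (r + 1))⁻¹ * Real.Gamma (r + 1)) = 1 / K := by
          rw [hDdef, hcval, hΓ1, hsval, neg_zero, Real.exp_zero,
            Real.rpow_add_one hb.ne']
          have hbr0 : (0:ℝ) < b ^ r := Real.rpow_pos_of_pos hb r
          field_simp
          rw [hbdef]
        rw [hlhs]
        have h1 : (1:ℝ) ≤ K ^ (r:ℝ) := Real.one_le_rpow hK.le hr.le
        have h2 : (1:ℝ) ≤ Real.exp (r + 1) * Real.exp (-r * K) := by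
          rw [← Real.exp_add]
          have hb' : r * K ≤ r + 1 := by rw [← hbdef]; exact h
          calc (1:ℝ) = Real.exp 0 := Real.exp_zero.symm
            _ ≤ Real.exp (r + 1 + -r * K) := Real.exp_le_exp.mpr (by nlinarith)
        have h3 : 1 / K ≤ 1 := by
          rw [div_le_one hK0]; linarith
        calc (1:ℝ) / K ≤ 1 := h3
          _ ≤ Real.exp (r + 1) * Real.exp (-r * K) * K ^ (r:ℝ) := by
              nlinarith [Real.exp_pos (r + 1), Real.exp_pos (-r * K)]
          _ = Real.exp (r + 1) * K ^ (r:ℝ) * Real.exp (-r * K) := by ring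
    -- assemble
    calc ∫⁻ x in Set.Ioi (1:ℝ), μ (Set.Ioi x)
        = ∫⁻ a, gammaPDF r b a * ENNReal.ofReal (max (a - 1) 0) := by
          rw [← lc3, ← lc2, ← lc1, wd]
      _ ≤ ∫⁻ a, (Set.Ioi (1:ℝ)).indicator
            (fun a => ENNReal.ofReal (D * (a ^ (r + 1 - 1) * Real.exp (-(c * a))))) a :=
          lintegral_mono ptw
      _ = ∫⁻ a in Set.Ioi (1:ℝ),
            ENNReal.ofReal (D * (a ^ (r + 1 - 1) * Real.exp (-(c * a)))) := by
          rw [lintegral_indicator measurableSet_Ioi]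
      _ ≤ ∫⁻ a in Set.Ioi (0:ℝ),
            ENNReal.ofReal (D * (a ^ (r + 1 - 1) * Real.exp (-(c * a)))) :=
          lintegral_mono_set (Set.Ioi_subset_Ioi zero_le_one)
      _ = ENNReal.ofReal D
            * ∫⁻ a in Set.Ioi (0:ℝ),
                ENNReal.ofReal (a ^ (r + 1 - 1) * Real.exp (-(c * a))) := by
          rw [← lintegral_const_mul' _ _ ENNReal.ofReal_ne_top]
          refine setLIntegral_congr_fun measurableSet_Ioi (fun a ha => ?_)
          rw [← ENNReal.ofReal_mul hD0]
      _ = ENNReal.ofReal D * ENNReal.ofReal ((c ^ (r + 1))⁻¹ * Real.Gamma (r + 1)) := by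
          rw [lintegral_rpow_exp_aux (by linarith) hc]
      _ = ENNReal.ofReal (D * ((c ^ (r + 1))⁻¹ * Real.Gamma (r + 1))) :=
          (ENNReal.ofReal_mul hD0).symm
      _ ≤ ENNReal.ofReal (Real.exp (r + 1) * K ^ (r:ℝ) * Real.exp (-r * K)) :=
          ENNReal.ofReal_le_ofReal final
  -- conclude from the lintegral bound
  have hmble : AEStronglyMeasurable (fun x : ℝ => (μ (Set.Ioi x)).toReal)
      (volume.restrict (Set.Ioi (1:ℝ))) := by
    have hanti : Antitone fun x : ℝ => μ (Set.Ioi x) :=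
      fun x y hxy => measure_mono (Set.Ioi_subset_Ioi hxy)
    exact (ENNReal.measurable_toReal.comp hanti.measurable).aestronglyMeasurable.restrict
  rw [MeasureTheory.integral_eq_lintegral_of_nonneg_ae
    (ae_of_all _ fun x => ENNReal.toReal_nonneg) hmble]
  have heq : ∫⁻ x in Set.Ioi (1:ℝ), ENNReal.ofReal ((μ (Set.Ioi x)).toReal)
      = ∫⁻ x in Set.Ioi (1:ℝ), μ (Set.Ioi x) :=
    lintegral_congr fun x => ENNReal.ofReal_toReal (measure_ne_top μ _)
  rw [heq]
  exact ENNReal.toReal_le_of_le_ofReal hRHS key
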